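/- arXiv:0811.3980 — 4 statements merged into one kernel-verified Lean document; each statement's English description precedes it below -/
import Mathlib

section
/- For every unit vector |ψ⟩ in ℂ^d with d ≥ 2, there exists a real orthogonal matrix K and an angle θ ∈ [0, π/2] such that K|ψ⟩ = (1/√2)(1, e^{iθ}, 0, ..., 0)^T up to a global phase. -/
open Complex Matrix
open scoped RealInnerProductSpace


open Complex Matrix
open scoped RealInnerProductSpace

lemma exists_isometry_of_gram {n : Type*} [Fintype n] [DecidableEq n]
    (a b u v : EuclideanSpace ℝ n)
    (h1 : ⟪a,a⟫ = ⟪u,u⟫) (h2 : ⟪a,b⟫ = ⟪u,v⟫) (h3 : ⟪b,b⟫ = ⟪v,v⟫) :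
    ∃ T : EuclideanSpace ℝ n →ₗᵢ[ℝ] EuclideanSpace ℝ n, T a = u ∧ T b = v := by
  have h2' : ⟪b,a⟫ = ⟪v,u⟫ := by
    rw [← real_inner_comm b a, ← real_inner_comm v u]; exact h2
  set M : ℝ × ℝ →ₗ[ℝ] EuclideanSpace ℝ n :=
    (LinearMap.toSpanSingleton ℝ _ a).coprod (LinearMap.toSpanSingleton ℝ _ b) with hM
  set L : ℝ × ℝ →ₗ[ℝ] EuclideanSpace ℝ n :=
    (LinearMap.toSpanSingleton ℝ _ u).coprod (LinearMap.toSpanSingleton ℝ _ v) with hL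
  have hMapp : ∀ x : ℝ × ℝ, M x = x.1 • a + x.2 • b := by
    intro x; simp [hM, LinearMap.toSpanSingleton_apply]
  have hLapp : ∀ x : ℝ × ℝ, L x = x.1 • u + x.2 • v := by
    intro x; simp [hL, LinearMap.toSpanSingleton_apply]
  have hnorm : ∀ x : ℝ × ℝ, ‖L x‖ = ‖M x‖ := by
    intro x
    have hi : ⟪L x, L x⟫ = ⟪M x, M x⟫ := by
      rw [hMapp, hLapp]
      simp only [inner_add_add_self, real_inner_smul_left, real_inner_smul_right]
      linear_combination (x.1*x.1) * h1.symm + (x.2*x.1) * h2'.symm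
        + (x.1*x.2) * h2.symm + (x.2*x.2) * h3.symm
    rw [← sq_eq_sq₀ (norm_nonneg _) (norm_nonneg _),
      ← real_inner_self_eq_norm_sq, ← real_inner_self_eq_norm_sq, hi]
  have hker : LinearMap.ker M ≤ LinearMap.ker L := by
    intro x hx
    rw [LinearMap.mem_ker] at hx ⊢
    have := hnorm x
    rw [hx, norm_zero, norm_eq_zero] at this
    exact this
  set L' : LinearMap.range M →ₗ[ℝ] EuclideanSpace ℝ n :=
    (Submodule.liftQ (LinearMap.ker M) L hker).comp M.quotKerEquivRange.symm.toLinearMap with hL'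
  have hL'app : ∀ (x : ℝ × ℝ) (h : M x ∈ LinearMap.range M), L' ⟨M x, h⟩ = L x := by
    intro x h
    rw [hL']
    simp only [LinearMap.coe_comp, LinearEquiv.coe_coe, Function.comp_apply,
      LinearMap.quotKerEquivRange_symm_apply_image]
    rw [Submodule.mkQ_apply, Submodule.liftQ_apply]
  have hL'norm : ∀ y : LinearMap.range M, ‖L' y‖ = ‖y‖ := by
    rintro ⟨w, hw⟩
    obtain ⟨x, rfl⟩ := hw
    rw [hL'app x (LinearMap.mem_range_self M x), hnorm x]
    rfl
  set Liso : LinearMap.range M →ₗᵢ[ℝ] EuclideanSpace ℝ n := ⟨L', hL'norm⟩ with hLiso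
  refine ⟨Liso.extend, ?_, ?_⟩
  · have hMa : M (1, 0) = a := by rw [hMapp]; simp
    have ha : a ∈ LinearMap.range M := ⟨(1,0), hMa⟩
    have key : Liso.extend ((⟨a, ha⟩ : LinearMap.range M) : EuclideanSpace ℝ n) = Liso ⟨a, ha⟩ :=
      Liso.extend_apply ⟨a, ha⟩
    have heq : (⟨a, ha⟩ : LinearMap.range M) = ⟨M (1,0), LinearMap.mem_range_self M _⟩ :=
      Subtype.ext hMa.symm
    calc Liso.extend a = Liso ⟨a, ha⟩ := key
    _ = L' ⟨M (1,0), LinearMap.mem_range_self M _⟩ := by rw [heq]; rfl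
    _ = L (1,0) := hL'app _ _
    _ = u := by rw [hLapp]; simp
  · have hMb : M (0, 1) = b := by rw [hMapp]; simp
    have hb : b ∈ LinearMap.range M := ⟨(0,1), hMb⟩
    have key : Liso.extend ((⟨b, hb⟩ : LinearMap.range M) : EuclideanSpace ℝ n) = Liso ⟨b, hb⟩ :=
      Liso.extend_apply ⟨b, hb⟩
    have heq : (⟨b, hb⟩ : LinearMap.range M) = ⟨M (0,1), LinearMap.mem_range_self M _⟩ :=
      Subtype.ext hMb.symm
    calc Liso.extend b = Liso ⟨b, hb⟩ := key
    _ = L' ⟨M (0,1), LinearMap.mem_range_self M _⟩ := by rw [heq]; rfl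
    _ = L (0,1) := hL'app _ _
    _ = v := by rw [hLapp]; simp

open Complex Matrix
open scoped RealInnerProductSpace

lemma isometry_to_matrix {d : ℕ}
    (T : EuclideanSpace ℝ (Fin d) →ₗᵢ[ℝ] EuclideanSpace ℝ (Fin d)) :
    ∃ K : Matrix (Fin d) (Fin d) ℝ, Kᵀ * K = 1 ∧
      ∀ x : EuclideanSpace ℝ (Fin d), K.mulVec x = T x := by
  refine ⟨Matrix.of (fun i j => T (EuclideanSpace.single j 1) i), ?_, ?_⟩
  · ext i j
    have h := T.inner_map_map (EuclideanSpace.single i (1:ℝ)) (EuclideanSpace.single j 1)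
    rw [EuclideanSpace.inner_single_left] at h
    simp only [PiLp.inner_apply, RCLike.inner_apply, conj_trivial, _root_.map_one, one_mul] at h
    simp only [Matrix.mul_apply, Matrix.transpose_apply, Matrix.of_apply, Matrix.one_apply]
    rw [EuclideanSpace.single_apply] at h
    rw [← h]
    exact Finset.sum_congr rfl fun _ _ => mul_comm _ _
  · intro x
    have hx : (∑ j, x j • EuclideanSpace.single j (1:ℝ)) = x := by
      ext k
      rw [WithLp.ofLp_sum, Finset.sum_apply]
      simp [EuclideanSpace.single_apply]
    conv_rhs => rw [← hx, map_sum]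
    funext i
    rw [WithLp.ofLp_sum, Finset.sum_apply]
    simp [Matrix.mulVec, dotProduct, EuclideanSpace.single_apply, mul_comm]


lemma sqrt2_arith1 (c : ℝ) : (1 + c^2)/2
    = (Real.sqrt 2)⁻¹ * (Real.sqrt 2)⁻¹ + c / Real.sqrt 2 * (c / Real.sqrt 2) := by
  have h : Real.sqrt 2 * Real.sqrt 2 = 2 := Real.mul_self_sqrt (by norm_num)
  have hne : Real.sqrt 2 ≠ 0 := by positivity
  field_simp
  nlinarith [h]
lemma sqrt2_arith2 (c s : ℝ) : c * s / 2 = s / Real.sqrt 2 * (c / Real.sqrt 2) := by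
  have h : Real.sqrt 2 * Real.sqrt 2 = 2 := Real.mul_self_sqrt (by norm_num)
  have hne : Real.sqrt 2 ≠ 0 := by positivity
  field_simp
  rw [Real.sq_sqrt (by norm_num : (0:ℝ) ≤ 2)]
lemma sqrt2_arith3 (s : ℝ) : s^2/2 = s / Real.sqrt 2 * (s / Real.sqrt 2) := by
  have h : Real.sqrt 2 * Real.sqrt 2 = 2 := Real.mul_self_sqrt (by norm_num)
  have hne : Real.sqrt 2 ≠ 0 := by positivity
  field_simp
  nlinarith [h]

set_option maxHeartbeats 2000000 in
/-- every unit vector in `ℂ^d` (`d ≥ 2`) can be brought, by a real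
orthogonal matrix (a unitary TRIO operation in the self-conjugate basis) and up to a
global phase, to the standard form `(1/√2)(1, e^{iθ}, 0, …, 0)ᵀ` with `θ ∈ [0, π/2]`. -/
theorem standard_resource_form
    {d : ℕ} (hd : 2 ≤ d) (ψ : Fin d → ℂ)
    (hψ : ∑ i, ‖ψ i‖ ^ 2 = 1) :
    ∃ K : Matrix (Fin d) (Fin d) ℝ, Kᵀ * K = 1 ∧
      ∃ θ : ℝ, θ ∈ Set.Icc 0 (Real.pi / 2) ∧ ∃ γ : ℝ,
        (K.map (Complex.ofReal)).mulVec ψ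
          = fun i => Complex.exp (Complex.I * (γ : ℂ)) *
              (if i = (⟨0, by omega⟩ : Fin d) then (1 / (Real.sqrt 2 : ℂ))
               else if i = (⟨1, by omega⟩ : Fin d) then
                 Complex.exp (Complex.I * (θ : ℂ)) / (Real.sqrt 2 : ℂ)
               else 0) := by
  classical
  set S : ℂ := ∑ i, (ψ i)^2 with hS
  set r : ℝ := ‖S‖ with hr
  have hr0 : 0 ≤ r := norm_nonneg S
  have hr1 : r ≤ 1 := by
    calc r ≤ ∑ i, ‖(ψ i)^2‖ := norm_sum_le _ _
    _ = ∑ i, ‖ψ i‖ ^ 2 := by simp [norm_pow]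
    _ = 1 := hψ
  set θ : ℝ := Real.arccos r with hθ
  have hθmem : θ ∈ Set.Icc 0 (Real.pi/2) := by
    constructor
    · exact Real.arccos_nonneg r
    · exact Real.arccos_le_pi_div_two.mpr hr0
  have hcos : Real.cos θ = r := Real.cos_arccos (by linarith) hr1
  have hsin0 : 0 ≤ Real.sin θ := Real.sin_nonneg_of_nonneg_of_le_pi hθmem.1
    (by linarith [hθmem.2, Real.pi_pos])
  set γ : ℝ := (S.arg - θ)/2 with hγ
  set φ : Fin d → ℂ := fun i => Complex.exp (-(Complex.I * γ)) * ψ i with hφ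
  set a : EuclideanSpace ℝ (Fin d) := WithLp.toLp 2 (fun i => (φ i).re) with ha
  set b : EuclideanSpace ℝ (Fin d) := WithLp.toLp 2 (fun i => (φ i).im) with hb
  have hφψ : ∀ i, ψ i = Complex.exp (Complex.I * γ) * ((a i : ℂ) + (b i) * Complex.I) := by
    intro i
    have h1 : ((a i : ℂ) + (b i) * Complex.I) = φ i := by
      simp only [ha, hb, PiLp.toLp_apply]; exact Complex.re_add_im (φ i)
    rw [h1, hφ]
    rw [← mul_assoc, ← Complex.exp_add]
    simp
  -- the bilinear sum identity
  have hS2 : ∑ i, (φ i)^2 = (r : ℂ) * Complex.exp (θ * Complex.I) := by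
    have hSalt : (r:ℂ) * Complex.exp (S.arg * Complex.I) = S := Complex.norm_mul_exp_arg_mul_I S
    have hexp : Complex.exp (-(Complex.I * γ))^2 * Complex.exp (S.arg * Complex.I)
        = Complex.exp (θ * Complex.I) := by
      rw [sq, ← Complex.exp_add, ← Complex.exp_add]
      congr 1
      rw [hγ]
      push_cast
      ring
    calc ∑ i, (φ i)^2 = Complex.exp (-(Complex.I * γ))^2 * S := by
          rw [hS, Finset.mul_sum]
          refine Finset.sum_congr rfl fun i _ => ?_
          rw [hφ]; ring
    _ = Complex.exp (-(Complex.I * γ))^2 * ((r:ℂ) * Complex.exp (S.arg * Complex.I)) := by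
          rw [hSalt]
    _ = (r : ℂ) * Complex.exp (θ * Complex.I) := by rw [← hexp]; ring
  have hre : ∑ i, (a i^2 - b i^2) = r * Real.cos θ := by
    have := congrArg Complex.re hS2
    rw [Complex.re_sum] at this
    simp only [pow_two, Complex.mul_re, Complex.ofReal_re, Complex.ofReal_im,
      Complex.exp_ofReal_mul_I_re, Complex.exp_ofReal_mul_I_im, zero_mul, sub_zero] at this
    convert this using 2 with i
    ring
  have him : ∑ i, (2 * (a i * b i)) = r * Real.sin θ := by
    have := congrArg Complex.im hS2
    rw [Complex.im_sum] at this
    simp only [pow_two, Complex.mul_im, Complex.ofReal_re, Complex.ofReal_im,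
      Complex.exp_ofReal_mul_I_re, Complex.exp_ofReal_mul_I_im, zero_mul, add_zero] at this
    convert this using 2 with i
    ring
  have hn : ∑ i, (a i^2 + b i^2) = 1 := by
    have habs : ∀ i, ‖φ i‖ = ‖ψ i‖ := by
      intro i
      rw [hφ]
      simp [_root_.map_mul, Complex.norm_exp]
    calc ∑ i, (a i^2 + b i^2) = ∑ i, ‖ψ i‖ ^ 2 := by
          refine Finset.sum_congr rfl fun i _ => ?_
          rw [← habs i, Complex.sq_norm, Complex.normSq_apply]
          ring
    _ = 1 := hψ
  -- Gram data
  clear_value S r θ γ φ a b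
  have hA : ∑ i, a i^2 = (1 + r^2)/2 := by
    have h1 : ∑ i, (a i^2 + b i^2) = 1 := hn
    rw [hcos] at hre
    rw [Finset.sum_add_distrib] at h1
    rw [Finset.sum_sub_distrib] at hre
    nlinarith [hre, h1]
  have hB : ∑ i, b i^2 = (1 - r^2)/2 := by
    have h1 := hn
    rw [hcos] at hre
    rw [Finset.sum_add_distrib] at h1
    rw [Finset.sum_sub_distrib] at hre
    nlinarith [hre, h1]
  have hC : ∑ i, a i * b i = r * Real.sin θ / 2 := by
    rw [← Finset.mul_sum] at him
    linarith [him]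
  -- target vectors
  set i0 : Fin d := ⟨0, by omega⟩ with hi0
  set i1 : Fin d := ⟨1, by omega⟩ with hi1
  have hne : i0 ≠ i1 := by
    rw [hi0, hi1]
    simp [Fin.ext_iff]
  set u : EuclideanSpace ℝ (Fin d) :=
    (Real.sqrt 2)⁻¹ • EuclideanSpace.single i0 1
      + (Real.cos θ / Real.sqrt 2) • EuclideanSpace.single i1 1 with hu
  set v : EuclideanSpace ℝ (Fin d) :=
    (Real.sin θ / Real.sqrt 2) • EuclideanSpace.single i1 1 with hv
  have hsqrt2 : Real.sqrt 2 ^ 2 = 2 := Real.sq_sqrt (by norm_num)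
  have hsqrt2pos : 0 < Real.sqrt 2 := Real.sqrt_pos.mpr (by norm_num)
  have hsingle00 : ⟪(EuclideanSpace.single i0 (1:ℝ)), EuclideanSpace.single i0 1⟫ = 1 := by
    rw [EuclideanSpace.inner_single_left]
    simp [EuclideanSpace.single_apply]
  have hsingle11 : ⟪(EuclideanSpace.single i1 (1:ℝ)), EuclideanSpace.single i1 1⟫ = 1 := by
    rw [EuclideanSpace.inner_single_left]
    simp [EuclideanSpace.single_apply]
  have hsingle01 : ⟪(EuclideanSpace.single i0 (1:ℝ)), EuclideanSpace.single i1 1⟫ = 0 := by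
    rw [EuclideanSpace.inner_single_left]
    simp only [EuclideanSpace.single_apply, conj_trivial, one_mul]
    rw [if_neg hne]
  have hsingle10 : ⟪(EuclideanSpace.single i1 (1:ℝ)), EuclideanSpace.single i0 1⟫ = 0 := by
    rw [EuclideanSpace.inner_single_left]
    simp only [EuclideanSpace.single_apply, conj_trivial, one_mul]
    rw [if_neg (Ne.symm hne)]
  have hinner_a : ⟪a, a⟫ = ∑ i, a i ^ 2 := by
    simp only [PiLp.inner_apply, RCLike.inner_apply, conj_trivial, pow_two]
  have hinner_b : ⟪b, b⟫ = ∑ i, b i ^ 2 := by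
    simp only [PiLp.inner_apply, RCLike.inner_apply, conj_trivial, pow_two]
  have hinner_ab : ⟪a, b⟫ = ∑ i, a i * b i := by
    simp only [PiLp.inner_apply, RCLike.inner_apply, conj_trivial]
    exact Finset.sum_congr rfl fun _ _ => mul_comm _ _
  have hsin_sq : Real.sin θ ^ 2 = 1 - r^2 := by
    have := Real.sin_sq_add_cos_sq θ
    rw [hcos] at this
    linarith
  have g1 : ⟪a, a⟫ = ⟪u, u⟫ := by
    rw [hinner_a, hA, hu]
    rw [inner_add_add_self]
    simp only [real_inner_smul_left, real_inner_smul_right,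
      hsingle00, hsingle11, hsingle01, hsingle10, mul_zero, mul_one, add_zero, zero_add]
    rw [← hcos]
    exact sqrt2_arith1 _
  have g2 : ⟪a, b⟫ = ⟪u, v⟫ := by
    rw [hinner_ab, hC, hu, hv]
    rw [inner_add_left]
    simp only [real_inner_smul_left, real_inner_smul_right,
      hsingle00, hsingle11, hsingle01, hsingle10, mul_zero, mul_one, add_zero, zero_add]
    rw [← hcos]
    exact sqrt2_arith2 _ _
  have g3 : ⟪b, b⟫ = ⟪v, v⟫ := by
    rw [hinner_b, hB, hv]
    simp only [real_inner_smul_left, real_inner_smul_right, hsingle11, mul_one]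
    rw [← hsin_sq]
    exact sqrt2_arith3 _
  obtain ⟨T, hTa, hTb⟩ := exists_isometry_of_gram a b u v g1 g2 g3
  obtain ⟨K, hK, hKmul⟩ := isometry_to_matrix T
  refine ⟨K, hK, θ, hθmem, γ, ?_⟩
  have hKa : K.mulVec a = u := by rw [hKmul a, hTa]
  have hKb : K.mulVec b = v := by rw [hKmul b, hTb]
  funext i
  have hKa' : ∑ j, K i j * a j = u i := by
    rw [← congrFun hKa i]
    simp [Matrix.mulVec, dotProduct]
  have hKb' : ∑ j, K i j * b j = v i := by
    rw [← congrFun hKb i]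
    simp [Matrix.mulVec, dotProduct]
  have lhs_eq : ((K.map (Complex.ofReal)).mulVec ψ) i
      = Complex.exp (Complex.I * γ) * ((u i : ℂ) + (v i : ℂ) * Complex.I) := by
    calc ((K.map (Complex.ofReal)).mulVec ψ) i
        = ∑ j, (K i j : ℂ) * ψ j := by
          simp [Matrix.mulVec, dotProduct, Matrix.map_apply]
    _ = ∑ j, Complex.exp (Complex.I * γ) * (((K i j * a j : ℝ) : ℂ) + ((K i j * b j : ℝ):ℂ) * Complex.I) := by
          refine Finset.sum_congr rfl fun j _ => ?_
          rw [hφψ j]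
          push_cast
          ring
    _ = Complex.exp (Complex.I * γ) * (((∑ j, K i j * a j : ℝ) : ℂ) + ((∑ j, K i j * b j : ℝ):ℂ) * Complex.I) := by
          rw [← Finset.mul_sum]
          congr 1
          push_cast
          rw [Finset.sum_add_distrib, Finset.sum_mul]
    _ = Complex.exp (Complex.I * γ) * ((u i : ℂ) + (v i : ℂ) * Complex.I) := by
          rw [hKa', hKb']
  rw [lhs_eq]
  by_cases h0 : i = i0
  · rw [h0]
    have hui : u i0 = (Real.sqrt 2)⁻¹ := by
      rw [hu]
      simp [PiLp.add_apply, PiLp.smul_apply, EuclideanSpace.single_apply, hne]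
    have hvi : v i0 = 0 := by
      rw [hv]
      simp [PiLp.smul_apply, EuclideanSpace.single_apply, hne]
    rw [hui, hvi, if_pos rfl]
    push_cast
    ring
  · by_cases h1 : i = i1
    · rw [h1]
      have hui : u i1 = Real.cos θ / Real.sqrt 2 := by
        rw [hu]
        simp [PiLp.add_apply, PiLp.smul_apply, EuclideanSpace.single_apply, Ne.symm hne]
      have hvi : v i1 = Real.sin θ / Real.sqrt 2 := by
        rw [hv]
        simp [PiLp.smul_apply, EuclideanSpace.single_apply]
      rw [hui, hvi, if_neg (Ne.symm hne), if_pos rfl]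
      rw [mul_comm Complex.I (θ:ℂ), Complex.exp_mul_I]
      have hs2ne : (Real.sqrt 2 : ℂ) ≠ 0 := by
        exact_mod_cast ne_of_gt (Real.sqrt_pos.mpr (by norm_num : (0:ℝ) < 2))
      rw [← Complex.ofReal_cos, ← Complex.ofReal_sin]
      push_cast
      field_simp
    · have hui : u i = 0 := by
        rw [hu]
        simp [PiLp.add_apply, PiLp.smul_apply, EuclideanSpace.single_apply, h0, h1]
      have hvi : v i = 0 := by
        rw [hv]
        simp [PiLp.smul_apply, EuclideanSpace.single_apply, h1]
      rw [hui, hvi, if_neg h0, if_neg h1]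
      push_cast
      ring
end

section
/- Let {K_k} be a finite set of real 2×2 matrices with Σ_k K_k†K_k = I, and let |ψ⟩ ∈ ℂ² be a unit vector. Set p_k = ‖K_k|ψ⟩‖² and, for p_k > 0, |φ_k⟩ = K_k|ψ⟩/√p_k. Then Σ_k p_k τ(|φ_k⟩) ≤ τ(|ψ⟩), where τ(|φ⟩) = 1 − |⟨φ*|φ⟩| and |φ*⟩ is the componentwise complex conjugate. -/
open Complex Matrix

/-- The time-reversal frameness monotone `τ(φ) = 1 - |⟨φ*|φ⟩| = 1 - |φ₀² + φ₁²|`. -/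
noncomputable def tau (φ : Fin 2 → ℂ) : ℝ := 1 - ‖φ 0 ^ 2 + φ 1 ^ 2‖

lemma term_eq (v : Fin 2 → ℂ) :
    (∑ i, ‖v i‖ ^ 2) * tau ((Real.sqrt (∑ i, ‖v i‖ ^ 2))⁻¹ • v)
      = (∑ i, ‖v i‖ ^ 2) - ‖v 0 ^ 2 + v 1 ^ 2‖ := by
  set p : ℝ := ∑ i, ‖v i‖ ^ 2 with hp
  have hp2 : p = ‖v 0‖ ^ 2 + ‖v 1‖ ^ 2 := by
    simp [hp, Fin.sum_univ_two]
  rcases eq_or_lt_of_le (by positivity : (0:ℝ) ≤ p) with h0 | h0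
  · have h00 : v 0 = 0 := by
      have : ‖v 0‖ = 0 := by
        nlinarith [norm_nonneg (v 0), norm_nonneg (v 1)]
      simpa using this
    have h01 : v 1 = 0 := by
      have : ‖v 1‖ = 0 := by
        nlinarith [norm_nonneg (v 0), norm_nonneg (v 1)]
      simpa using this
    simp [← h0, h00, h01]
  · have hs : 0 < Real.sqrt p := Real.sqrt_pos.mpr h0
    have hsm : ∀ i, ((Real.sqrt p)⁻¹ • v) i = (((Real.sqrt p)⁻¹ : ℝ) : ℂ) * v i := by
      intro i; simp [Complex.real_smul]
    have hsq : ((Real.sqrt p)⁻¹ • v) 0 ^ 2 + ((Real.sqrt p)⁻¹ • v) 1 ^ 2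
        = (((Real.sqrt p)⁻¹ : ℝ) : ℂ) ^ 2 * (v 0 ^ 2 + v 1 ^ 2) := by
      rw [hsm 0, hsm 1]; ring
    have habs : ‖(((Real.sqrt p)⁻¹ : ℝ) : ℂ) ^ 2 * (v 0 ^ 2 + v 1 ^ 2)‖
        = p⁻¹ * ‖v 0 ^ 2 + v 1 ^ 2‖ := by
      have h2 : |(Real.sqrt p)⁻¹| ^ 2 = p⁻¹ := by
        rw [_root_.sq_abs, ← Real.sqrt_inv, Real.sq_sqrt (by positivity)]
      rw [norm_mul, norm_pow, Complex.norm_real, Real.norm_eq_abs, h2]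
    rw [tau, hsq, habs]
    field_simp

lemma key_sum {N : ℕ} (M : Fin N → Matrix (Fin 2) (Fin 2) ℂ) (hM : ∑ k, (M k)ᵀ * M k = 1)
    (a b : Fin 2 → ℂ) :
    ∑ k, ∑ i, (M k).mulVec a i * (M k).mulVec b i = ∑ i, a i * b i := by
  have step : ∀ k, ∑ i, (M k).mulVec a i * (M k).mulVec b i
      = a ⬝ᵥ ((M k)ᵀ * M k).mulVec b := by
    intro k
    simp [Matrix.mulVec, dotProduct, Matrix.mul_apply, Fin.sum_univ_two]
    ring
  have hsum : (∑ k, (M k)ᵀ * M k).mulVec b = ∑ k, ((M k)ᵀ * M k).mulVec b :=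
    map_sum (Matrix.mulVec.addMonoidHomLeft b) _ _
  calc ∑ k, ∑ i, (M k).mulVec a i * (M k).mulVec b i
      = ∑ k, a ⬝ᵥ ((M k)ᵀ * M k).mulVec b := Finset.sum_congr rfl fun k _ => step k
    _ = a ⬝ᵥ (∑ k, (M k)ᵀ * M k).mulVec b := by
        rw [hsum]
        simp only [dotProduct, Finset.sum_apply, Finset.mul_sum]
        rw [Finset.sum_comm]
    _ = ∑ i, a i * b i := by rw [hM, Matrix.one_mulVec]; rfl

lemma conj_mulVec (A : Matrix (Fin 2) (Fin 2) ℝ) (ψ : Fin 2 → ℂ) (i : Fin 2) :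
    (A.map Complex.ofReal).mulVec (fun j => (starRingEnd ℂ) (ψ j)) i
      = (starRingEnd ℂ) ((A.map Complex.ofReal).mulVec ψ i) := by
  simp [Matrix.mulVec, dotProduct, Fin.sum_univ_two, Matrix.map_apply, _root_.map_mul,
    Complex.conj_ofReal]

/-- `τ` is an ensemble monotone under TRIO measurements: for any finite
family of real Kraus operators `K_k` with `Σ_k K_k†K_k = 1` and any unit vector `ψ`,
with `p_k = ‖K_k ψ‖²` and `φ_k = K_k ψ / √p_k`, we have `Σ_k p_k τ(φ_k) ≤ τ(ψ)`. -/
theorem tau_ensemble_monotone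
    {N : ℕ} (K : Fin N → Matrix (Fin 2) (Fin 2) ℝ)
    (hK : ∑ k, (K k)ᵀ * K k = 1)
    (ψ : Fin 2 → ℂ) (hψ : ∑ i, ‖ψ i‖ ^ 2 = 1) :
    ∑ k, (∑ i, ‖((K k).map Complex.ofReal).mulVec ψ i‖ ^ 2) *
        tau ((Real.sqrt (∑ i, ‖((K k).map Complex.ofReal).mulVec ψ i‖ ^ 2))⁻¹
              • ((K k).map Complex.ofReal).mulVec ψ)
      ≤ tau ψ := by
  set M : Fin N → Matrix (Fin 2) (Fin 2) ℂ := fun k => (K k).map Complex.ofReal with hMdef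
  have hM : ∑ k, (M k)ᵀ * M k = 1 := by
    have h1 := congrArg (RingHom.mapMatrix (Complex.ofRealHom) :
      Matrix (Fin 2) (Fin 2) ℝ →+* Matrix (Fin 2) (Fin 2) ℂ) hK
    simp [map_sum, RingHom.mapMatrix_apply, Matrix.transpose_map,
      Complex.ofRealHom_eq_coe, hMdef] at h1 ⊢
    exact h1
  set v : Fin N → Fin 2 → ℂ := fun k => (M k).mulVec ψ with hv
  -- rewrite each term via term_eq
  have hterm : ∀ k, (∑ i, ‖v k i‖ ^ 2) *
      tau ((Real.sqrt (∑ i, ‖v k i‖ ^ 2))⁻¹ • v k)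
      = (∑ i, ‖v k i‖ ^ 2) - ‖v k 0 ^ 2 + v k 1 ^ 2‖ :=
    fun k => term_eq (v k)
  -- sum of probabilities is 1
  have hp1 : ∑ k, ∑ i, ‖v k i‖ ^ 2 = 1 := by
    have E := key_sum M hM (fun j => (starRingEnd ℂ) (ψ j)) ψ
    have E2 : ((∑ k, ∑ i, ‖v k i‖ ^ 2 : ℝ) : ℂ)
        = ((∑ i, ‖ψ i‖ ^ 2 : ℝ) : ℂ) := by
      push_cast
      calc ∑ k, ∑ i, ((‖v k i‖ : ℂ) ^ 2)
          = ∑ k, ∑ i, (M k).mulVec (fun j => (starRingEnd ℂ) (ψ j)) i * (M k).mulVec ψ i := by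
            refine Finset.sum_congr rfl fun k _ => Finset.sum_congr rfl fun i _ => ?_
            rw [conj_mulVec (K k) ψ i]
            rw [show (starRingEnd ℂ) ((M k).mulVec ψ i) * (M k).mulVec ψ i
                = ((Complex.normSq (v k i) : ℝ) : ℂ) from
              (Complex.normSq_eq_conj_mul_self).symm]
            rw [← Complex.sq_norm]
            push_cast
            ring
        _ = ∑ i, (starRingEnd ℂ) (ψ i) * ψ i := E
        _ = ∑ i, ((‖ψ i‖ : ℂ) ^ 2) := by
            refine Finset.sum_congr rfl fun i _ => ?_
            rw [show (starRingEnd ℂ) (ψ i) * ψ i = ((Complex.normSq (ψ i) : ℝ) : ℂ) from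
              (Complex.normSq_eq_conj_mul_self).symm, ← Complex.sq_norm]
            push_cast
            ring
    have := Complex.ofReal_injective E2
    rw [this, hψ]
  -- sum of the complex inner products
  have hc : ∑ k, (v k 0 ^ 2 + v k 1 ^ 2) = ψ 0 ^ 2 + ψ 1 ^ 2 := by
    have E := key_sum M hM ψ ψ
    simpa [Fin.sum_univ_two, sq, hv] using E
  have habs : ‖ψ 0 ^ 2 + ψ 1 ^ 2‖ ≤ ∑ k, ‖v k 0 ^ 2 + v k 1 ^ 2‖ := by
    rw [← hc]
    exact norm_sum_le _ _
  calc ∑ k, (∑ i, ‖v k i‖ ^ 2) *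
        tau ((Real.sqrt (∑ i, ‖v k i‖ ^ 2))⁻¹ • v k)
      = ∑ k, ((∑ i, ‖v k i‖ ^ 2) - ‖v k 0 ^ 2 + v k 1 ^ 2‖) :=
        Finset.sum_congr rfl fun k _ => hterm k
    _ = 1 - ∑ k, ‖v k 0 ^ 2 + v k 1 ^ 2‖ := by
        rw [Finset.sum_sub_distrib, hp1]
    _ ≤ 1 - ‖ψ 0 ^ 2 + ψ 1 ^ 2‖ := by linarith
    _ = tau ψ := rfl
end

section
/- Let θ, γ ∈ [0, π/2] with γ ≤ θ, and let A = 1/2 + (1/2)√((cos²γ − cos²θ)/(1 − cos²θ)) (assuming θ > 0). Define K₁ = [[√(A/2), √((1−A)/2)], [√(A/2), −√((1−A)/2)]] and K₂ = [[−√((1−A)/2), √(A/2)], [√((1−A)/2), √(A/2)]]. Then K₁†K₁ + K₂†K₂ = I, and for |ψ⟩ = (1/√2)(e^{iθ/2}, e^{−iθ/2})^T, the normalized post-measurement states √2 K₁|ψ⟩ and √2 K₂|ψ⟩ both satisfy τ = 1 − cos γ. -/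
set_option maxHeartbeats 1000000


open Complex Matrix

/-- The standard state `|ψ_θ⟩ = (1/√2)(e^{iθ/2}, e^{-iθ/2})ᵀ`. -/
noncomputable def stdState (θ : ℝ) : Fin 2 → ℂ := fun i =>
  if i = 0 then Complex.exp (Complex.I * (θ : ℂ) / 2) / (Real.sqrt 2 : ℂ)
  else Complex.exp (-(Complex.I * (θ : ℂ)) / 2) / (Real.sqrt 2 : ℂ)

lemma tau_eq (x y : ℝ) (φ : Fin 2 → ℂ) (h : φ 0 ^ 2 + φ 1 ^ 2 = (x : ℂ) + (y : ℂ) * Complex.I) :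
    tau φ = 1 - Real.sqrt (x ^ 2 + y ^ 2) := by
  rw [tau, h, Complex.norm_add_mul_I]

/-- the explicit two-outcome TRIO measurement of the Nielsen-analogue
theorem: with `A = ½ + ½√((cos²γ - cos²θ)/(1 - cos²θ))`, the real Kraus operators
`K₁, K₂` satisfy `K₁†K₁ + K₂†K₂ = 1`, and both normalized post-measurement states
`√2 K₁|ψ_θ⟩`, `√2 K₂|ψ_θ⟩` have `τ = 1 - cos γ`. -/
theorem nielsen_measurement_construction
    (θ γ : ℝ) (hθ : θ ∈ Set.Icc 0 (Real.pi / 2)) (hγ : γ ∈ Set.Icc 0 (Real.pi / 2))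
    (hγθ : γ ≤ θ) (hθpos : 0 < θ)
    (A : ℝ)
    (hA : A = 1 / 2 + Real.sqrt ((Real.cos γ ^ 2 - Real.cos θ ^ 2) / (1 - Real.cos θ ^ 2)) / 2)
    (K₁ K₂ : Matrix (Fin 2) (Fin 2) ℝ)
    (hK₁ : K₁ = !![Real.sqrt (A / 2), Real.sqrt ((1 - A) / 2);
                   Real.sqrt (A / 2), -Real.sqrt ((1 - A) / 2)])
    (hK₂ : K₂ = !![-Real.sqrt ((1 - A) / 2), Real.sqrt (A / 2);
                   Real.sqrt ((1 - A) / 2), Real.sqrt (A / 2)]) :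
    K₁ᵀ * K₁ + K₂ᵀ * K₂ = 1 ∧
    tau ((Real.sqrt 2 : ℂ) • (K₁.map Complex.ofReal).mulVec (stdState θ)) = 1 - Real.cos γ ∧
    tau ((Real.sqrt 2 : ℂ) • (K₂.map Complex.ofReal).mulVec (stdState θ)) = 1 - Real.cos γ := by
  obtain ⟨hθ0, hθπ⟩ := hθ
  obtain ⟨hγ0, hγπ⟩ := hγ
  have hπ := Real.pi_pos
  have hsθ : 0 < Real.sin θ := Real.sin_pos_of_pos_of_lt_pi hθpos (by linarith)
  have hcγ : 0 ≤ Real.cos γ := Real.cos_nonneg_of_mem_Icc ⟨by linarith, hγπ⟩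
  have hcθ : 0 ≤ Real.cos θ := Real.cos_nonneg_of_mem_Icc ⟨by linarith, hθπ⟩
  have hcc : Real.cos θ ≤ Real.cos γ := Real.cos_le_cos_of_nonneg_of_le_pi hγ0 (by linarith) hγθ
  have hden : 1 - Real.cos θ ^ 2 = Real.sin θ ^ 2 := by
    have := Real.sin_sq_add_cos_sq θ; linarith
  have hdenpos : 0 < 1 - Real.cos θ ^ 2 := by rw [hden]; positivity
  set r : ℝ := (Real.cos γ ^ 2 - Real.cos θ ^ 2) / (1 - Real.cos θ ^ 2) with hr
  have hr0 : 0 ≤ r := div_nonneg (by nlinarith) hdenpos.le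
  have hr1 : r ≤ 1 := by
    rw [hr, div_le_one hdenpos]; nlinarith [Real.neg_one_le_cos γ, Real.cos_le_one γ]
  set s : ℝ := Real.sqrt r with hs
  have hs0 : 0 ≤ s := Real.sqrt_nonneg r
  have hs2 : s ^ 2 = r := Real.sq_sqrt hr0
  have hs1 : s ≤ 1 := by nlinarith
  have hA0 : 0 ≤ A := by rw [hA]; positivity
  have hA1 : A ≤ 1 := by rw [hA]; linarith
  have hAs : 2 * A - 1 = s := by rw [hA]; ring
  set a : ℝ := Real.sqrt (A / 2) with ha
  set b : ℝ := Real.sqrt ((1 - A) / 2) with hb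
  have ha2 : a ^ 2 = A / 2 := Real.sq_sqrt (by linarith)
  have hb2 : b ^ 2 = (1 - A) / 2 := Real.sq_sqrt (by linarith)
  subst hK₁ hK₂
  have hs2ne : (Real.sqrt 2 : ℂ) ≠ 0 := by
    norm_cast; positivity
  set E : ℂ := Complex.exp (Complex.I * (θ : ℂ) / 2) with hE
  set F : ℂ := Complex.exp (-(Complex.I * (θ : ℂ)) / 2) with hF
  have hE2 : E ^ 2 = (Real.cos θ : ℂ) + (Real.sin θ : ℂ) * Complex.I := by
    rw [hE, sq, ← Complex.exp_add,
      show Complex.I * (θ : ℂ) / 2 + Complex.I * (θ : ℂ) / 2 = (θ : ℂ) * Complex.I by ring,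
      Complex.exp_mul_I, Complex.ofReal_cos, Complex.ofReal_sin]
  have hF2 : F ^ 2 = (Real.cos θ : ℂ) - (Real.sin θ : ℂ) * Complex.I := by
    rw [hF, sq, ← Complex.exp_add,
      show -(Complex.I * (θ : ℂ)) / 2 + -(Complex.I * (θ : ℂ)) / 2
        = ((-θ : ℝ) : ℂ) * Complex.I by push_cast; ring,
      Complex.exp_mul_I, Complex.ofReal_cos, Complex.ofReal_sin]
    push_cast
    rw [Complex.cos_neg, Complex.sin_neg]
    ring
  have haC : (a : ℂ) ^ 2 = (A : ℂ) / 2 := by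
    norm_cast
  have hbC : (b : ℂ) ^ 2 = (1 - (A : ℂ)) / 2 := by
    rw [show ((b : ℂ)) ^ 2 = ((b ^ 2 : ℝ) : ℂ) by push_cast; ring, hb2]
    push_cast; ring
  have hsC : (s : ℂ) = 2 * (A : ℂ) - 1 := by push_cast [← hAs]; ring
  have hkey : Real.cos θ ^ 2 + (s * Real.sin θ) ^ 2 = Real.cos γ ^ 2 := by
    rw [mul_pow, hs2, hr]
    field_simp
    nlinarith [hden]
  refine ⟨?_, ?_, ?_⟩
  · ext i j
    fin_cases i <;> fin_cases j <;>
      simp [Matrix.mul_apply, Fin.sum_univ_two, Matrix.one_apply,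
        Matrix.vecHead, Matrix.vecTail] <;> nlinarith [ha2, hb2]
  · rw [tau_eq (Real.cos θ) (s * Real.sin θ) _ ?_]
    · rw [hkey, Real.sqrt_sq hcγ]
    · have hv0 : ((Real.sqrt 2 : ℂ) • (!![a, b; a, -b].map Complex.ofReal).mulVec (stdState θ)) 0
          = (a : ℂ) * E + (b : ℂ) * F := by
        simp [Matrix.mulVec, dotProduct, Fin.sum_univ_two, stdState, hE, hF]
        field_simp
        try ring
      have hv1 : ((Real.sqrt 2 : ℂ) • (!![a, b; a, -b].map Complex.ofReal).mulVec (stdState θ)) 1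
          = (a : ℂ) * E - (b : ℂ) * F := by
        simp [Matrix.mulVec, dotProduct, Fin.sum_univ_two, stdState, hE, hF]
        field_simp
        try ring
      rw [hv0, hv1,
        show ((a:ℂ)*E + b*F)^2 + ((a:ℂ)*E - b*F)^2 = 2*(a:ℂ)^2*E^2 + 2*(b:ℂ)^2*F^2 by ring,
        haC, hbC, hE2, hF2]
      push_cast
      rw [hsC]
      ring
  · rw [tau_eq (Real.cos θ) (-(s * Real.sin θ)) _ ?_]
    · rw [show (-(s * Real.sin θ)) ^ 2 = (s * Real.sin θ) ^ 2 by ring, hkey, Real.sqrt_sq hcγ]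
    · have hv0 : ((Real.sqrt 2 : ℂ) • (!![-b, a; b, a].map Complex.ofReal).mulVec (stdState θ)) 0
          = -(b : ℂ) * E + (a : ℂ) * F := by
        simp [Matrix.mulVec, dotProduct, Fin.sum_univ_two, stdState, hE, hF]
        field_simp
        try ring
      have hv1 : ((Real.sqrt 2 : ℂ) • (!![-b, a; b, a].map Complex.ofReal).mulVec (stdState θ)) 1
          = (b : ℂ) * E + (a : ℂ) * F := by
        simp [Matrix.mulVec, dotProduct, Fin.sum_univ_two, stdState, hE, hF]
        field_simp
        try ring
      rw [hv0, hv1,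
        show (-(b:ℂ)*E + a*F)^2 + ((b:ℂ)*E + a*F)^2 = 2*(b:ℂ)^2*E^2 + 2*(a:ℂ)^2*F^2 by ring,
        haC, hbC, hE2, hF2]
      push_cast
      rw [hsC]
      ring
end

section
/- Suppose m ∈ ℤ + 1/2 is a half-odd integer and θ_{ℓm} varies as ±πm. Then the phase condition arg ψ_{μℓm} + arg ψ_{μℓ,−m} ≡ θ_{ℓm} (mod 2π) is inconsistent with its counterpart at −m: θ_{ℓm} and θ_{ℓ,−m} differ by π (mod 2π), while the left-hand side is symmetric in m ↔ −m; hence no state can satisfy both, i.e. θ̂ has no eigenvectors in a spinor representation. -/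
open Complex

/-- in a spinor representation (all magnetic quantum numbers `m`
half-odd integers), with the phase convention `θ_{ℓm} = s·πm` (`s = ±1`), the
antilinear time-reversal operator
`(θ̂ψ)(μ,ℓ,m) = conj (ψ(μ,ℓ,-m)) e^{i s π (-m)}` has no eigenvectors: no nonzero
state supported on half-odd `m` satisfies `θ̂ψ = c ψ`. -/
theorem spinor_no_eigenvectors
    (s : ℝ) (hs : s = 1 ∨ s = -1)
    (ψ : ℕ × ℕ × ℝ → ℂ)
    (hsupp : ∀ (μ ℓ : ℕ) (m : ℝ), (¬ ∃ k : ℤ, m = (k : ℝ) + 1 / 2) → ψ (μ, ℓ, m) = 0)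
    (hψ : ψ ≠ 0) :
    ¬ ∃ c : ℂ,
      (fun b : ℕ × ℕ × ℝ =>
          (starRingEnd ℂ) (ψ (b.1, b.2.1, -b.2.2)) *
            Complex.exp (Complex.I * (s : ℂ) * (Real.pi : ℂ) * (-(b.2.2) : ℂ)))
        = fun b => c * ψ b := by
  rintro ⟨c, hc⟩
  apply hψ
  funext b
  obtain ⟨μ, ℓ, m⟩ := b
  show ψ (μ, ℓ, m) = 0
  by_cases hm : ∃ k : ℤ, m = (k : ℝ) + 1 / 2
  · obtain ⟨k, hk⟩ := hm
    set z : ℂ := Complex.I * (s : ℂ) * (Real.pi : ℂ) * (m : ℂ) with hz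
    set E : ℂ := Complex.exp z with hE
    -- E^2 = -1
    have hE2 : E * E = -1 := by
      have h2m : (m : ℂ) + (m : ℂ) = ((2 * k + 1 : ℤ) : ℂ) := by
        push_cast [hk]; ring
      have : E * E = Complex.exp ((Real.pi : ℂ) * Complex.I *
          ((s : ℂ) * ((2 * k + 1 : ℤ) : ℂ))) := by
        rw [hE, ← Complex.exp_add, hz]
        congr 1
        rw [← h2m]; ring
      rcases hs with hs1 | hs1
      · rw [this, hs1]
        push_cast
        rw [one_mul]
        have : (Real.pi : ℂ) * Complex.I * ((2 * (k : ℂ) + 1)) =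
            ((2 * k + 1 : ℤ) : ℂ) * ((Real.pi : ℂ) * Complex.I) := by push_cast; ring
        rw [this, Complex.exp_int_mul, Complex.exp_pi_mul_I]
        exact Odd.neg_one_zpow ⟨k, by ring⟩
      · rw [this, hs1]
        push_cast
        have : (Real.pi : ℂ) * Complex.I * (-1 * (2 * (k : ℂ) + 1)) =
            ((-(2 * k + 1) : ℤ) : ℂ) * ((Real.pi : ℂ) * Complex.I) := by push_cast; ring
        rw [this, Complex.exp_int_mul, Complex.exp_pi_mul_I]
        exact Odd.neg_one_zpow ⟨-k - 1, by ring⟩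
    -- exp(-z) = -E
    have hEne : E ≠ 0 := Complex.exp_ne_zero z
    have hinv : Complex.exp (-z) = -E := by
      have h1 : E * Complex.exp (-z) = 1 := by
        rw [hE, ← Complex.exp_add, add_neg_cancel, Complex.exp_zero]
      have h2 : E * (-E) = 1 := by rw [mul_neg, hE2]; ring
      exact mul_left_cancel₀ hEne (h1.trans h2.symm)
    -- conj E = -E
    have hconjE : (starRingEnd ℂ) E = -E := by
      rw [hE, ← Complex.exp_conj]
      have : (starRingEnd ℂ) z = -z := by
        rw [hz]
        simp [map_mul, Complex.conj_I, Complex.conj_ofReal]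
      rw [this, hinv]
    have h1 := congrFun hc (μ, ℓ, m)
    have h2 := congrFun hc (μ, ℓ, -m)
    simp only at h1 h2
    push_cast [neg_neg] at h2
    -- h1 : conj ψ₋ * exp(I s π (-m)) = c * ψ₊
    -- h2 : conj ψ₊ * exp(I s π m) = c * ψ₋
    have hnz : Complex.I * (s : ℂ) * (Real.pi : ℂ) * (-(m : ℝ) : ℂ) = -z := by
      rw [hz]; push_cast; ring
    have hz' : Complex.I * (s : ℂ) * (Real.pi : ℂ) * ((m : ℝ) : ℂ) = z := by
      rw [hz]
    rw [hnz, hinv] at h1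
    rw [hz'] at h2
    -- conj of h2
    have h2c := congrArg (starRingEnd ℂ) h2
    rw [map_mul, map_mul, Complex.conj_conj, ← hE, hconjE] at h2c
    -- h2c : ψ₊ * (-E) = conj c * conj ψ₋
    have key : ψ (μ, ℓ, m) * (-E) * (-E) =
        (starRingEnd ℂ) c * ((starRingEnd ℂ) (ψ (μ, ℓ, -m)) * (-E)) := by
      rw [h2c]; ring
    rw [h1] at key
    have hEE : (-E) * (-E) = -1 := by rw [neg_mul_neg, hE2]
    have key2 : ψ (μ, ℓ, m) * (1 + (starRingEnd ℂ) c * c) = 0 := by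
      linear_combination ψ (μ, ℓ, m) * hE2 - key
    have hcne : (1 : ℂ) + (starRingEnd ℂ) c * c ≠ 0 := by
      have : (starRingEnd ℂ) c * c = (Complex.normSq c : ℂ) := by
        rw [mul_comm, Complex.mul_conj]
      rw [this]
      intro h
      have := congrArg Complex.re h
      simp at this
      nlinarith [Complex.normSq_nonneg c]
    exact (mul_eq_zero.mp key2).resolve_right hcne
  · exact hsupp μ ℓ m hm
end
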